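/- arXiv:1403.1649 — 2 statements merged into one kernel-verified Lean document; each statement's English description precedes it below -/
import Mathlib

section
/- Let A be a real symmetric positive definite n×n matrix, r ∈ ℝⁿ, and c, d ∈ ℝⁿ linearly independent. Define v = A·c, ρ₁ = ⟨c, v⟩, α₁ = ⟨c, r⟩, r̃ = r − (α₁/ρ₁)·v, w = A·d, γ = ⟨d, v⟩, β = ⟨d, w⟩, α₂ = ⟨d, r̃⟩, ρ₂ = β − γ²/ρ₁, and x = (α₁/ρ₁ − γ·α₂/(ρ₁·ρ₂))·c + (α₂/ρ₂)·d. Then ⟨c, r − A·x⟩ = 0 and ⟨d, r − A·x⟩ = 0; that is, the K-cycle CG update x solves the Galerkin (normal) equations on the two-dimensional correction space span{c, d}. -/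
open Matrix

theorem kcycle_cg_two_dim_galerkin (n : ℕ)
    (A : Matrix (Fin n) (Fin n) ℝ) (hA : A.PosDef)
    (r c d : Fin n → ℝ) (hcd : LinearIndependent ℝ ![c, d])
    (v : Fin n → ℝ) (hv : v = A.mulVec c)
    (ρ₁ α₁ : ℝ) (hρ₁ : ρ₁ = c ⬝ᵥ v) (hα₁ : α₁ = c ⬝ᵥ r)
    (r' : Fin n → ℝ) (hr' : r' = r - (α₁ / ρ₁) • v)
    (w : Fin n → ℝ) (hw : w = A.mulVec d)
    (γ β α₂ ρ₂ : ℝ)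
    (hγ : γ = d ⬝ᵥ v) (hβ : β = d ⬝ᵥ w) (hα₂ : α₂ = d ⬝ᵥ r')
    (hρ₂ : ρ₂ = β - γ ^ 2 / ρ₁)
    (x : Fin n → ℝ)
    (hx : x = (α₁ / ρ₁ - γ * α₂ / (ρ₁ * ρ₂)) • c + (α₂ / ρ₂) • d) :
    c ⬝ᵥ (r - A.mulVec x) = 0 ∧ d ⬝ᵥ (r - A.mulVec x) = 0 := by
  have hpair := LinearIndependent.pair_iff.mp hcd
  have hc0 : c ≠ 0 := by
    intro h; have := (hpair 1 0 (by simp [h])).1; norm_num at this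
  -- symmetry: c ⬝ᵥ A *ᵥ d = d ⬝ᵥ A *ᵥ c
  have hAT : Aᵀ = A := by
    have h := hA.isHermitian.eq
    rwa [show Aᴴ = Aᵀ from rfl] at h
  have hsym : ∀ y z : Fin n → ℝ, y ⬝ᵥ A.mulVec z = z ⬝ᵥ A.mulVec y := by
    intro y z
    rw [dotProduct_mulVec, ← mulVec_transpose, hAT, dotProduct_comm]
  have hpos : ∀ y : Fin n → ℝ, y ≠ 0 → 0 < y ⬝ᵥ A.mulVec y := by
    intro y hy
    simpa using hA.dotProduct_mulVec_pos hy
  have hρ₁pos : 0 < ρ₁ := by rw [hρ₁, hv]; exact hpos c hc0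
  have hρ₁0 : ρ₁ ≠ 0 := ne_of_gt hρ₁pos
  set u : Fin n → ℝ := d - (γ / ρ₁) • c with hu
  have hu0 : u ≠ 0 := by
    intro h
    rw [hu] at h
    have hd := sub_eq_zero.mp h
    have hz : (γ / ρ₁) • c + (-1 : ℝ) • d = 0 := by
      rw [hd]; simp
    have := (hpair (γ/ρ₁) (-1) hz).2; norm_num at this
  have hρ₂pos : 0 < ρ₂ := by
    have hcw : c ⬝ᵥ w = γ := by rw [hw, hγ, hv]; exact hsym c d
    have h1 : u ⬝ᵥ A.mulVec u = ρ₂ := by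
      rw [hu, show A.mulVec (d - (γ/ρ₁)•c) = w - (γ/ρ₁)•v by
        rw [hv, hw, mulVec_sub, mulVec_smul],
        sub_dotProduct, smul_dotProduct, dotProduct_sub, dotProduct_sub,
        dotProduct_smul, dotProduct_smul, smul_eq_mul, smul_eq_mul, smul_eq_mul,
        hcw, ← hβ, ← hγ, ← hρ₁, hρ₂]
      field_simp
      ring
    rw [← h1]; exact hpos u hu0
  have hρ₂0 : ρ₂ ≠ 0 := ne_of_gt hρ₂pos
  have hcd' : c ⬝ᵥ A.mulVec d = γ := by rw [hγ, hv]; exact hsym c d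
  constructor
  · rw [hx, mulVec_add, mulVec_smul, mulVec_smul, dotProduct_sub, dotProduct_add,
      dotProduct_smul, dotProduct_smul, smul_eq_mul, smul_eq_mul, hcd', ← hv, ← hρ₁, ← hα₁]
    field_simp
    ring
  · have hdr : d ⬝ᵥ r = α₂ + α₁ / ρ₁ * γ := by
      rw [hα₂, hr', dotProduct_sub, dotProduct_smul, smul_eq_mul, ← hγ]; ring
    rw [hx, mulVec_add, mulVec_smul, mulVec_smul, dotProduct_sub, dotProduct_add,
      dotProduct_smul, dotProduct_smul, smul_eq_mul, smul_eq_mul, ← hv, ← hw, ← hγ, ← hβ, hdr]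
    have : β = ρ₂ + γ^2 / ρ₁ := by rw [hρ₂]; ring
    rw [this]
    field_simp
    ring
end

section
/- Let A be a real n×n matrix, r ∈ ℝⁿ, and c, d ∈ ℝⁿ vectors such that A·c and A·d are linearly independent. With v = A·c, ρ₁ = ‖v‖², α₁ = ⟨v, r⟩, r̃ = r − (α₁/ρ₁)·v, w = A·d, γ = ⟨w, v⟩, β = ‖w‖², α₂ = ⟨w, r̃⟩, ρ₂ = β − γ²/ρ₁, and x = (α₁/ρ₁ − γ·α₂/(ρ₁·ρ₂))·c + (α₂/ρ₂)·d, the residual of the combined K-cycle update satisfies ‖r − A·x‖₂ ≤ ‖r − A·y‖₂ for every y in the span of c and d; in particular ‖r − A·x‖₂ ≤ ‖r̃‖₂ ≤ ‖r‖₂. -/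
open Matrix Finset

lemma kc_ssq_eq_dot (n : ℕ) (f : Fin n → ℝ) : ∑ i, (f i)^2 = f ⬝ᵥ f := by
  simp [dotProduct, sq]

lemma kc_ssq_pos (n : ℕ) (f : Fin n → ℝ) (hf : f ≠ 0) : 0 < ∑ i, (f i)^2 := by
  rcases Function.ne_iff.mp hf with ⟨i, hi⟩
  exact Finset.sum_pos' (fun j _ => sq_nonneg _)
    ⟨i, Finset.mem_univ i, pow_pos (abs_pos.mpr hi) 2 |>.trans_eq (sq_abs _)⟩

theorem kcycle_gmres_two_dim_minres (n : ℕ)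
    (A : Matrix (Fin n) (Fin n) ℝ)
    (r c d : Fin n → ℝ) (hcd : LinearIndependent ℝ ![A.mulVec c, A.mulVec d])
    (v : Fin n → ℝ) (hv : v = A.mulVec c)
    (ρ₁ α₁ : ℝ) (hρ₁ : ρ₁ = ∑ i, (v i) ^ 2) (hα₁ : α₁ = v ⬝ᵥ r)
    (r' : Fin n → ℝ) (hr' : r' = r - (α₁ / ρ₁) • v)
    (w : Fin n → ℝ) (hw : w = A.mulVec d)
    (γ β α₂ ρ₂ : ℝ)
    (hγ : γ = w ⬝ᵥ v) (hβ : β = ∑ i, (w i) ^ 2) (hα₂ : α₂ = w ⬝ᵥ r')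
    (hρ₂ : ρ₂ = β - γ ^ 2 / ρ₁)
    (x : Fin n → ℝ)
    (hx : x = (α₁ / ρ₁ - γ * α₂ / (ρ₁ * ρ₂)) • c + (α₂ / ρ₂) • d) :
    (∀ y ∈ Submodule.span ℝ ({c, d} : Set (Fin n → ℝ)),
        Real.sqrt (∑ i, ((r - A.mulVec x) i) ^ 2) ≤
          Real.sqrt (∑ i, ((r - A.mulVec y) i) ^ 2)) ∧
      Real.sqrt (∑ i, ((r - A.mulVec x) i) ^ 2) ≤ Real.sqrt (∑ i, (r' i) ^ 2) ∧
      Real.sqrt (∑ i, (r' i) ^ 2) ≤ Real.sqrt (∑ i, (r i) ^ 2) := by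
  rw [← hv, ← hw] at hcd
  -- basic positivity
  have hv0 : v ≠ 0 := by
    have := hcd.ne_zero 0; simpa using this
  have hρ₁pos : 0 < ρ₁ := hρ₁ ▸ kc_ssq_pos n v hv0
  have hρ₁ne : ρ₁ ≠ 0 := ne_of_gt hρ₁pos
  have hvv : v ⬝ᵥ v = ρ₁ := by rw [hρ₁, kc_ssq_eq_dot]
  have hww : w ⬝ᵥ w = β := by rw [hβ, kc_ssq_eq_dot]
  have hvw : v ⬝ᵥ w = γ := by rw [hγ, dotProduct_comm]
  have hwv : w ⬝ᵥ v = γ := hγ.symm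
  -- ρ₂ > 0
  have hw'0 : w - (γ / ρ₁) • v ≠ 0 := by
    intro h
    have h2 : (γ / ρ₁) • v + (-1 : ℝ) • w = 0 := by
      have := sub_eq_zero.mp h
      simp [← this]
    have := (LinearIndependent.pair_iff.mp hcd (γ / ρ₁) (-1) h2).2
    norm_num at this
  have hρ₂eq : ρ₂ = ∑ i, ((w - (γ / ρ₁) • v) i) ^ 2 := by
    rw [kc_ssq_eq_dot]
    simp only [sub_dotProduct, dotProduct_sub, smul_dotProduct, dotProduct_smul,
      hvv, hww, hvw, hwv, smul_eq_mul]
    rw [hρ₂]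
    field_simp
    ring
  have hρ₂pos : 0 < ρ₂ := hρ₂eq ▸ kc_ssq_pos n _ hw'0
  have hρ₂ne : ρ₂ ≠ 0 := ne_of_gt hρ₂pos
  -- the residual e and its orthogonality
  set s : ℝ := α₁ / ρ₁ - γ * α₂ / (ρ₁ * ρ₂) with hs
  set t : ℝ := α₂ / ρ₂ with ht
  have hAx : A.mulVec x = s • v + t • w := by
    rw [hx, Matrix.mulVec_add, Matrix.mulVec_smul, Matrix.mulVec_smul, hv, hw]
  set e : Fin n → ℝ := r - A.mulVec x with he
  have hvr : v ⬝ᵥ r = α₁ := hα₁.symm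
  have hwr : w ⬝ᵥ r = α₂ + α₁ * γ / ρ₁ := by
    have : α₂ = w ⬝ᵥ r - (α₁ / ρ₁) * γ := by
      rw [hα₂, hr']
      simp [dotProduct_sub, dotProduct_smul, hwv]
    rw [this]; field_simp; ring
  have hev : v ⬝ᵥ e = 0 := by
    rw [he, dotProduct_sub, hAx, dotProduct_add, dotProduct_smul, dotProduct_smul,
      hvv, hvw, hvr, smul_eq_mul, smul_eq_mul, hs, ht]
    field_simp
    ring
  have hew : w ⬝ᵥ e = 0 := by
    rw [he, dotProduct_sub, hAx, dotProduct_add, dotProduct_smul, dotProduct_smul,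
      hwv, hww, hwr, smul_eq_mul, smul_eq_mul, hs, ht,
      show β = ρ₂ + γ ^ 2 / ρ₁ by rw [hρ₂]; ring]
    field_simp
    ring
  -- key lemma: pythagoras
  have key : ∀ p q : ℝ, ∑ i, (e i) ^ 2 ≤ ∑ i, ((e + p • v + q • w) i) ^ 2 := by
    intro p q
    have expand : ∑ i, ((e + p • v + q • w) i) ^ 2 =
        ∑ i, (e i) ^ 2 + 2 * (p * (v ⬝ᵥ e) + q * (w ⬝ᵥ e))
          + ∑ i, ((p • v + q • w) i) ^ 2 := by
      rw [kc_ssq_eq_dot, kc_ssq_eq_dot, kc_ssq_eq_dot]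
      simp only [add_dotProduct, dotProduct_add, smul_dotProduct, dotProduct_smul,
        smul_eq_mul, dotProduct_comm e v, dotProduct_comm e w]
      ring
    rw [expand, hev, hew]
    have : 0 ≤ ∑ i, ((p • v + q • w) i) ^ 2 := Finset.sum_nonneg fun i _ => sq_nonneg _
    linarith
  -- main claim
  have main : ∀ y ∈ Submodule.span ℝ ({c, d} : Set (Fin n → ℝ)),
      ∑ i, ((r - A.mulVec x) i) ^ 2 ≤ ∑ i, ((r - A.mulVec y) i) ^ 2 := by
    intro y hy
    rcases Submodule.mem_span_pair.mp hy with ⟨a, b, hab⟩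
    have hAy : A.mulVec y = a • v + b • w := by
      rw [← hab, Matrix.mulVec_add, Matrix.mulVec_smul, Matrix.mulVec_smul, hv, hw]
    have hry : r - A.mulVec y = e + (s - a) • v + (t - b) • w := by
      rw [he, hAy, hAx]
      funext i
      simp [sub_smul]
      ring
    rw [hry, ← he]
    exact key (s - a) (t - b)
  refine ⟨fun y hy => Real.sqrt_le_sqrt (main y hy), ?_, ?_⟩
  · have hc : (α₁ / ρ₁) • c ∈ Submodule.span ℝ ({c, d} : Set (Fin n → ℝ)) :=
      Submodule.smul_mem _ _ (Submodule.subset_span (by simp))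
    have := main _ hc
    rw [show r - A.mulVec ((α₁ / ρ₁) • c) = r' by
      rw [hr', Matrix.mulVec_smul, hv]] at this
    exact Real.sqrt_le_sqrt this
  · apply Real.sqrt_le_sqrt
    have : ∑ i, (r' i) ^ 2 = ∑ i, (r i) ^ 2 - α₁ ^ 2 / ρ₁ := by
      rw [kc_ssq_eq_dot, kc_ssq_eq_dot, hr']
      simp only [sub_dotProduct, dotProduct_sub, smul_dotProduct, dotProduct_smul,
        smul_eq_mul, hvv, hvr, dotProduct_comm r v, hvr]
      field_simp
      ring
    rw [this]
    have : 0 ≤ α₁ ^ 2 / ρ₁ := by positivity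
    linarith
end
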